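/- Let h_i(w_4, w_5) in Z/2[w_4, w_5] be defined by h_0 = 1, h_1 = h_2 = h_3 = 0, and h_i = w_4 h_{i-4} + w_5 h_{i-5} for i \geq 4 (with h_j = 0 for j < 0). Then for every t \geq 4, h_{2^t - 3}(w_4, w_5) is a nonzero polynomial. -/

import Mathlib

open MvPolynomial

/-- In `ℤ/2[w₄, w₅]` (here `X 4`, `X 5` denote `w₄`, `w₅`), let `h i` be defined by
`h 0 = 1`, `h 1 = h 2 = h 3 = 0` and `h i = w₄ h_{i-4} + w₅ h_{i-5}` for `i ≥ 4`
(with `h_j = 0` for `j < 0`).  Then `h (2^t - 3) ≠ 0` for every `t ≥ 4`. -/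
theorem h_pow_two_sub_three_ne_zero
    (h : ℕ → MvPolynomial ℕ (ZMod 2))
    (h0 : h 0 = 1) (h1 : h 1 = 0) (h2 : h 2 = 0) (h3 : h 3 = 0)
    (h4 : h 4 = X 4 * h 0)
    (hrec : ∀ i : ℕ, h (i + 5) = X 4 * h (i + 1) + X 5 * h i) :
    ∀ t : ℕ, 4 ≤ t → h (2 ^ t - 3) ≠ 0 := by
  intro t ht hzero
  set A := DualNumber (ZMod 2) with hA
  set f : ℕ → A := fun i => if i = 4 then 1 else if i = 5 then DualNumber.eps else 0
    with hf
  set a : ℕ → A := fun n => aeval f (h n) with ha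
  have hf4 : f 4 = 1 := by simp [hf]
  have hf5 : f 5 = DualNumber.eps := by simp [hf]
  have ha0 : a 0 = 1 := by simp [ha, h0]
  have ha1 : a 1 = 0 := by simp [ha, h1]
  have ha2 : a 2 = 0 := by simp [ha, h2]
  have ha3 : a 3 = 0 := by simp [ha, h3]
  have ha4 : a 4 = 1 := by
    simp [ha, h4, h0, hf4]
  have harec : ∀ i, a (i + 5) = a (i + 1) + DualNumber.eps * a i := by
    intro i
    simp only [ha, hrec i, map_add, map_mul, aeval_X, hf4, hf5, one_mul]
  have htwo : (2 : A) = 0 := by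
    have h2z : (2 : ZMod 2) = 0 := by decide
    calc (2 : A) = algebraMap (ZMod 2) A 2 := (map_ofNat _ 2).symm
    _ = 0 := by rw [h2z, map_zero]
  have key : ∀ k : ℕ, a (4 * k) = 1 ∧ a (4 * k + 1) = (k : A) * DualNumber.eps ∧
      a (4 * k + 2) = 0 ∧ a (4 * k + 3) = 0 ∧ a (4 * k + 4) = 1 := by
    intro k
    induction k with
    | zero => simpa using ⟨ha0, ha1, ha2, ha3, ha4⟩
    | succ k ih =>
      obtain ⟨i0, i1, i2, i3, i4⟩ := ih
      have e1 : a (4 * (k + 1) + 1) = ((k : A) + 1) * DualNumber.eps := by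
        have := harec (4 * k)
        rw [show 4 * k + 5 = 4 * (k + 1) + 1 by ring] at this
        rw [this, i1, i0, mul_one]
        ring
      refine ⟨?_, ?_, ?_, ?_, ?_⟩
      · rw [show 4 * (k + 1) = 4 * k + 4 by ring]; exact i4
      · rw [e1]; push_cast; ring
      · have := harec (4 * k + 1)
        rw [show 4 * k + 1 + 5 = 4 * (k + 1) + 2 by ring] at this
        rw [this, i2, i1, show DualNumber.eps * ((k : A) * DualNumber.eps)
          = (k : A) * (DualNumber.eps * DualNumber.eps) by ring,
          DualNumber.eps_mul_eps]
        ring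
      · have := harec (4 * k + 2)
        rw [show 4 * k + 2 + 5 = 4 * (k + 1) + 3 by ring] at this
        rw [this, i3, i2, mul_zero, add_zero]
      · have := harec (4 * k + 3)
        rw [show 4 * k + 3 + 5 = 4 * (k + 1) + 4 by ring] at this
        rw [this, i4, i3, mul_zero, add_zero]
  -- arithmetic: 2^t - 3 = 4 * (2^(t-2) - 1) + 1 and 2^(t-2) - 1 is odd
  obtain ⟨s, rfl⟩ : ∃ s, t = s + 2 := ⟨t - 2, by omega⟩
  have hpow : 2 ^ (s + 2) = 4 * 2 ^ s := by ring
  have hsge : 2 ≤ s := by omega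
  have hpow2 : 2 ^ s = 2 * 2 ^ (s - 1) := by
    rw [← pow_succ']
    congr 1
    omega
  have hge : 4 ≤ 2 ^ (s - 1) * 2 := by
    calc 4 = 2 ^ 1 * 2 := by norm_num
    _ ≤ 2 ^ (s - 1) * 2 := by
        apply Nat.mul_le_mul_right
        exact Nat.pow_le_pow_right (by norm_num) (by omega)
  set k := 2 ^ s - 1 with hk
  have hidx : 2 ^ (s + 2) - 3 = 4 * k + 1 := by omega
  obtain ⟨m, hm⟩ : ∃ m, k = 2 * m + 1 := ⟨2 ^ (s - 1) - 1, by omega⟩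
  have hkA : (k : A) = 1 := by
    rw [hm]
    push_cast
    show ((2 * m : ℕ) : DualNumber (ZMod 2)) + 1 = 1
    rw [Nat.cast_mul, Nat.cast_ofNat, show (2 : DualNumber (ZMod 2)) = 0 from htwo]
    ring
  obtain ⟨-, hq, -⟩ := key k
  rw [← hidx] at hq
  have : a (2 ^ (s + 2) - 3) = 0 := by simp [ha, hzero]
  rw [this, hkA, one_mul] at hq
  have : DualNumber.eps.snd = (0 : ZMod 2) := by rw [← hq]; rfl
  simp at this
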